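/- Let L(λ) = λB + A be an m×n complex matrix pencil which is a block-diagonal direct sum of canonical blocks, each of one of the following four types: (i) a Jordan block at a finite eigenvalue μ₀ ∈ ℂ, i.e., the k×k pencil λI_k + J_k(μ₀), where J_k(μ₀) has −μ₀ on the diagonal, 1 on the superdiagonal, and zeros elsewhere (k ≥ 1); (ii) a Jordan block at infinity, i.e., the k×k pencil λN_k + I_k, where N_k is the nilpotent upper-shift matrix (k ≥ 1); (iii) a right singular block R_k(λ), the k×(k+1) pencil whose (i,i) entries are λ and whose (i,i+1) entries are 1 (k ≥ 0); (iv) a left singular block R_k(λ)ᵀ (k ≥ 0). Then for every μ ∈ ℂ and every d ≥ 1, the nullity of P_μ^d(L) (i.e., dn − rank P_μ^d(L)) equals Σ min(d, k_j) + d·p, where the sum ranges over the type-(i) blocks whose eigenvalue μ₀ equals μ (k_j being their sizes) and p is the number of type-(iii) blocks. -/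

import Mathlib

/-- A canonical block of the Kronecker canonical form. Sizes are encoded so that all four
types are allowed exactly in their natural ranges: Jordan blocks (finite or infinite
eigenvalue) have size `(k+1) × (k+1)` with `k : ℕ` (i.e. size at least 1), a right singular
block `R_k(λ)` has size `k × (k+1)` with `k ≥ 0`, and a left singular block `R_k(λ)ᵀ` has
size `(k+1) × k` with `k ≥ 0`. -/
inductive KroneckerBlock : Type
  | jordanFin (k : ℕ) (μ₀ : ℂ) : KroneckerBlock  -- `λ I_{k+1} + J_{k+1}(μ₀)`
  | jordanInf (k : ℕ) : KroneckerBlock           -- `λ N_{k+1} + I_{k+1}`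
  | rightSing (k : ℕ) : KroneckerBlock           -- `R_k(λ)`, size `k × (k+1)`
  | leftSing (k : ℕ) : KroneckerBlock            -- `R_k(λ)ᵀ`, size `(k+1) × k`

namespace KroneckerBlock

/-- Number of rows of a canonical block. -/
def rows : KroneckerBlock → ℕ
  | jordanFin k _ => k + 1
  | jordanInf k => k + 1
  | rightSing k => k
  | leftSing k => k + 1

/-- Number of columns of a canonical block. -/
def cols : KroneckerBlock → ℕ
  | jordanFin k _ => k + 1
  | jordanInf k => k + 1
  | rightSing k => k + 1
  | leftSing k => k

/-- The coefficient of `λ` in the canonical block pencil. -/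
def Bmat : (b : KroneckerBlock) → Matrix (Fin b.rows) (Fin b.cols) ℂ
  | jordanFin _ _ => fun i j => if (j : ℕ) = (i : ℕ) then 1 else 0
  | jordanInf _ => fun i j => if (j : ℕ) = (i : ℕ) + 1 then 1 else 0
  | rightSing _ => fun i j => if (j : ℕ) = (i : ℕ) then 1 else 0
  | leftSing _ => fun i j => if (i : ℕ) = (j : ℕ) then 1 else 0

/-- The constant coefficient in the canonical block pencil. -/
def Amat : (b : KroneckerBlock) → Matrix (Fin b.rows) (Fin b.cols) ℂ
  | jordanFin _ μ₀ => fun i j =>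
      if (j : ℕ) = (i : ℕ) then -μ₀ else if (j : ℕ) = (i : ℕ) + 1 then 1 else 0
  | jordanInf _ => fun i j => if (j : ℕ) = (i : ℕ) then 1 else 0
  | rightSing _ => fun i j => if (j : ℕ) = (i : ℕ) + 1 then 1 else 0
  | leftSing _ => fun i j => if (i : ℕ) = (j : ℕ) + 1 then 1 else 0

/-- Whether the block is a right singular block `R_k(λ)`. -/
def isRightSing : KroneckerBlock → Bool
  | rightSing _ => true
  | _ => false

/-- The contribution `min(d, size)` of a type-(i) block with eigenvalue `μ`, and `0` for
any other block. -/
noncomputable def jordanContribution (d : ℕ) (μ : ℂ) : KroneckerBlock → ℕ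
  | jordanFin k μ₀ => if μ₀ = μ then min d (k + 1) else 0
  | _ => 0

end KroneckerBlock

/-- For a pencil `L(λ) = λB + A` with coefficients indexed by arbitrary finite types, the
block matrix `P_μ^d(L)` with diagonal blocks `L(μ) = μB + A` and first-subdiagonal blocks
`B`. -/
def pencilBlockMat' {I J : Type*} (A B : Matrix I J ℂ) (μ : ℂ) (d : ℕ) :
    Matrix (Fin d × I) (Fin d × J) ℂ :=
  fun p q =>
    if p.1 = q.1 then (μ • B + A) p.2 q.2
    else if (p.1 : ℕ) = (q.1 : ℕ) + 1 then B p.2 q.2 else 0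

namespace NullityAux

lemma sum_ite_one {n : ℕ} (c : ℕ) (a : ℂ) (v : Fin n → ℂ) :
    ∑ j : Fin n, (if (j : ℕ) = c then a else 0) * v j
      = if h : c < n then a * v ⟨c, h⟩ else 0 := by
  split_ifs with h
  · rw [Finset.sum_eq_single (⟨c, h⟩ : Fin n)]
    · simp
    · intro j _ hj
      rw [if_neg, zero_mul]
      simpa [Fin.ext_iff] using hj
    · simp
  · apply Finset.sum_eq_zero; intro j _
    rw [if_neg, zero_mul]
    exact fun hc => h (hc ▸ j.isLt)

lemma sum_ite_one_comm {n : ℕ} (c : ℕ) (a : ℂ) (v : Fin n → ℂ) :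
    ∑ j : Fin n, (if c = (j : ℕ) then a else 0) * v j
      = if h : c < n then a * v ⟨c, h⟩ else 0 := by
  rw [← sum_ite_one c a v]
  simp_rw [eq_comm]

lemma sum_ite_two {n : ℕ} (c₁ c₂ : ℕ) (h12 : c₁ ≠ c₂) (a₁ a₂ : ℂ) (v : Fin n → ℂ) :
    ∑ j : Fin n, (if (j : ℕ) = c₁ then a₁ else if (j : ℕ) = c₂ then a₂ else 0) * v j
      = (if h : c₁ < n then a₁ * v ⟨c₁, h⟩ else 0)
        + (if h : c₂ < n then a₂ * v ⟨c₂, h⟩ else 0) := by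
  have : ∀ j : Fin n,
      (if (j : ℕ) = c₁ then a₁ else if (j : ℕ) = c₂ then a₂ else 0) * v j
        = (if (j : ℕ) = c₁ then a₁ else 0) * v j + (if (j : ℕ) = c₂ then a₂ else 0) * v j := by
    intro j
    by_cases h1 : (j : ℕ) = c₁ <;> by_cases h2 : (j : ℕ) = c₂ <;>
      simp_all <;> ring
  rw [Finset.sum_congr rfl fun j _ => this j, Finset.sum_add_distrib,
    sum_ite_one, sum_ite_one]

lemma sum_ite_one' {n : ℕ} (c : ℕ) (a : ℂ) (v : Fin n → ℂ) :
    ∑ j : Fin n, (if c = (j : ℕ) + 1 then a else 0) * v j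
      = if h : 1 ≤ c ∧ c - 1 < n then a * v ⟨c - 1, h.2⟩ else 0 := by
  split_ifs with h
  · rw [Finset.sum_eq_single (⟨c - 1, h.2⟩ : Fin n)]
    · rw [if_pos (by simp only [Fin.val_mk]; omega)]
    · intro j _ hj
      have hj' : (j : ℕ) ≠ c - 1 := by simpa [Fin.ext_iff] using hj
      rw [if_neg (by omega), zero_mul]
    · simp
  · apply Finset.sum_eq_zero; intro j _
    rw [if_neg, zero_mul]
    have := j.isLt
    omega

lemma sum_ite_two' {n : ℕ} (c : ℕ) (a₁ a₂ : ℂ) (v : Fin n → ℂ) :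
    ∑ j : Fin n, (if c = (j : ℕ) then a₁ else if c = (j : ℕ) + 1 then a₂ else 0) * v j
      = (if h : c < n then a₁ * v ⟨c, h⟩ else 0)
        + (if h : 1 ≤ c ∧ c - 1 < n then a₂ * v ⟨c - 1, h.2⟩ else 0) := by
  have : ∀ j : Fin n,
      (if c = (j : ℕ) then a₁ else if c = (j : ℕ) + 1 then a₂ else 0) * v j
        = (if (j : ℕ) = c then a₁ else 0) * v j + (if c = (j : ℕ) + 1 then a₂ else 0) * v j := by
    intro j
    by_cases h1 : c = (j : ℕ) <;> by_cases h2 : c = (j : ℕ) + 1 <;>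
      simp_all [eq_comm] <;> omega
  rw [Finset.sum_congr rfl fun j _ => this j, Finset.sum_add_distrib,
    sum_ite_one, sum_ite_one']

lemma sum_ite_pred {n : ℕ} (p : Fin n) (v : Fin n → ℂ) :
    ∑ q : Fin n, (if (p : ℕ) = (q : ℕ) + 1 then v q else 0)
      = if h : 1 ≤ (p : ℕ) then v ⟨(p : ℕ) - 1, Nat.lt_of_le_of_lt (Nat.sub_le _ _) p.isLt⟩
        else 0 := by
  split_ifs with h
  · rw [Finset.sum_eq_single (⟨(p : ℕ) - 1, Nat.lt_of_le_of_lt (Nat.sub_le _ _) p.isLt⟩ : Fin n)]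
    · rw [if_pos (by simp only [Fin.val_mk]; omega)]
    · intro q _ hq
      have hq' : (q : ℕ) ≠ (p : ℕ) - 1 := by simpa [Fin.ext_iff] using hq
      rw [if_neg (by omega)]
    · simp
  · apply Finset.sum_eq_zero; intro q _
    rw [if_neg]; omega

lemma pencil_mulVec_apply {r c : ℕ} (A B : Matrix (Fin r) (Fin c) ℂ) (μ : ℂ) (d : ℕ)
    (x : Fin d × Fin c → ℂ) (p : Fin d) (i : Fin r) :
    (pencilBlockMat' A B μ d).mulVec x (p, i)
      = (∑ j, (μ • B + A) i j * x (p, j))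
        + (if h : 1 ≤ (p : ℕ) then
            ∑ j, B i j * x (⟨(p : ℕ) - 1, Nat.lt_of_le_of_lt (Nat.sub_le _ _) p.isLt⟩, j)
          else 0) := by
  have expand : ∀ q : Fin d,
      (∑ j, (if p = q then (μ • B + A) i j else if (p : ℕ) = (q : ℕ) + 1 then B i j else 0)
        * x (q, j))
      = (if p = q then ∑ j, (μ • B + A) i j * x (q, j) else 0)
        + (if (p : ℕ) = (q : ℕ) + 1 then ∑ j, B i j * x (q, j) else 0) := by
    intro q
    by_cases h1 : p = q
    · have h2 : ¬ ((p : ℕ) = (q : ℕ) + 1) := by subst h1; omega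
      simp [h1, h2]
    · by_cases h2 : (p : ℕ) = (q : ℕ) + 1 <;> simp [h1, h2]
  calc (pencilBlockMat' A B μ d).mulVec x (p, i)
      = ∑ q : Fin d, ∑ j,
          (if p = q then (μ • B + A) i j else if (p : ℕ) = (q : ℕ) + 1 then B i j else 0)
            * x (q, j) := by
        simp only [Matrix.mulVec, dotProduct, pencilBlockMat']
        rw [Fintype.sum_prod_type]
    _ = ∑ q : Fin d, ((if p = q then ∑ j, (μ • B + A) i j * x (q, j) else 0)
          + (if (p : ℕ) = (q : ℕ) + 1 then ∑ j, B i j * x (q, j) else 0)) :=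
        Finset.sum_congr rfl fun q _ => expand q
    _ = _ := by
        rw [Finset.sum_add_distrib, Finset.sum_ite_eq, if_pos (Finset.mem_univ p),
          sum_ite_pred]

end NullityAux


open KroneckerBlock NullityAux

lemma row_jordanFin (k : ℕ) (μ₀ μ : ℂ) (d : ℕ) (x : Fin d × Fin (k + 1) → ℂ)
    (p : Fin d) (i : Fin (k + 1)) :
    (pencilBlockMat' (jordanFin k μ₀).Amat (jordanFin k μ₀).Bmat μ d).mulVec x (p, i)
      = (μ - μ₀) * x (p, i)
        + (if h : (i : ℕ) + 1 < k + 1 then x (p, ⟨(i : ℕ) + 1, h⟩) else 0)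
        + (if h : 1 ≤ (p : ℕ) then
            x (⟨(p : ℕ) - 1, Nat.lt_of_le_of_lt (Nat.sub_le _ _) p.isLt⟩, i) else 0) := by
  erw [pencil_mulVec_apply]
  have e1 : ∀ j : Fin (k + 1),
      (μ • (jordanFin k μ₀).Bmat + (jordanFin k μ₀).Amat) i j
        = if (j : ℕ) = (i : ℕ) then μ - μ₀ else if (j : ℕ) = (i : ℕ) + 1 then 1 else 0 := by
    intro j
    show μ * _ + _ = _
    simp only [Amat, Bmat]
    split_ifs <;> simp_all <;> ring
  rw [Finset.sum_congr rfl fun j _ => by rw [e1 j]]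
  rw [sum_ite_two _ _ (by omega)]
  simp only [Bmat]
  rw [sum_ite_one]
  simp only [cols]
  erw [dif_pos i.isLt, dif_pos i.isLt]
  simp only [Fin.eta, one_mul]

lemma row_jordanInf (k : ℕ) (μ : ℂ) (d : ℕ) (x : Fin d × Fin (k + 1) → ℂ)
    (p : Fin d) (i : Fin (k + 1)) :
    (pencilBlockMat' (jordanInf k).Amat (jordanInf k).Bmat μ d).mulVec x (p, i)
      = x (p, i)
        + (if h : (i : ℕ) + 1 < k + 1 then μ * x (p, ⟨(i : ℕ) + 1, h⟩) else 0)
        + (if hp : 1 ≤ (p : ℕ) then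
            (if h : (i : ℕ) + 1 < k + 1 then
              x (⟨(p : ℕ) - 1, Nat.lt_of_le_of_lt (Nat.sub_le _ _) p.isLt⟩, ⟨(i : ℕ) + 1, h⟩)
            else 0) else 0) := by
  erw [pencil_mulVec_apply]
  have e1 : ∀ j : Fin (k + 1),
      (μ • (jordanInf k).Bmat + (jordanInf k).Amat) i j
        = if (j : ℕ) = (i : ℕ) then 1 else if (j : ℕ) = (i : ℕ) + 1 then μ else 0 := by
    intro j
    show μ * _ + _ = _
    simp only [Amat, Bmat]
    split_ifs <;> simp_all <;> ring
  rw [Finset.sum_congr rfl fun j _ => by rw [e1 j]]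
  rw [sum_ite_two _ _ (by omega)]
  simp only [Bmat]
  rw [sum_ite_one]
  simp only [cols]
  erw [dif_pos i.isLt]
  simp only [Fin.eta, one_mul]
  rfl

lemma row_rightSing (k : ℕ) (μ : ℂ) (d : ℕ) (x : Fin d × Fin (k + 1) → ℂ)
    (p : Fin d) (i : Fin k) :
    (pencilBlockMat' (rightSing k).Amat (rightSing k).Bmat μ d).mulVec x (p, i)
      = μ * x (p, ⟨(i : ℕ), Nat.lt_succ_of_lt i.isLt⟩)
        + x (p, ⟨(i : ℕ) + 1, Nat.succ_lt_succ i.isLt⟩)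
        + (if hp : 1 ≤ (p : ℕ) then
            x (⟨(p : ℕ) - 1, Nat.lt_of_le_of_lt (Nat.sub_le _ _) p.isLt⟩,
               ⟨(i : ℕ), Nat.lt_succ_of_lt i.isLt⟩) else 0) := by
  erw [pencil_mulVec_apply]
  have e1 : ∀ j : Fin (k + 1),
      (μ • (rightSing k).Bmat + (rightSing k).Amat) i j
        = if (j : ℕ) = (i : ℕ) then μ else if (j : ℕ) = (i : ℕ) + 1 then 1 else 0 := by
    intro j
    show μ * _ + _ = _
    simp only [Amat, Bmat]
    split_ifs <;> simp_all <;> ring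
  rw [Finset.sum_congr rfl fun j _ => by rw [e1 j]]
  rw [sum_ite_two _ _ (by omega)]
  simp only [Bmat]
  rw [sum_ite_one]
  simp only [cols]
  erw [dif_pos (Nat.lt_succ_of_lt i.isLt), dif_pos (Nat.succ_lt_succ i.isLt),
    dif_pos (Nat.lt_succ_of_lt i.isLt)]
  simp only [one_mul]

lemma row_leftSing (k : ℕ) (μ : ℂ) (d : ℕ) (x : Fin d × Fin k → ℂ)
    (p : Fin d) (i : Fin (k + 1)) :
    (pencilBlockMat' (leftSing k).Amat (leftSing k).Bmat μ d).mulVec x (p, i)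
      = (if h : (i : ℕ) < k then μ * x (p, ⟨(i : ℕ), h⟩) else 0)
        + (if h : 1 ≤ (i : ℕ) ∧ (i : ℕ) - 1 < k then x (p, ⟨(i : ℕ) - 1, h.2⟩) else 0)
        + (if hp : 1 ≤ (p : ℕ) then
            (if h : (i : ℕ) < k then
              x (⟨(p : ℕ) - 1, Nat.lt_of_le_of_lt (Nat.sub_le _ _) p.isLt⟩, ⟨(i : ℕ), h⟩)
            else 0) else 0) := by
  erw [pencil_mulVec_apply]
  have e1 : ∀ j : Fin k,
      (μ • (leftSing k).Bmat + (leftSing k).Amat) i j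
        = if (i : ℕ) = (j : ℕ) then μ else if (i : ℕ) = (j : ℕ) + 1 then 1 else 0 := by
    intro j
    show μ * _ + _ = _
    simp only [Amat, Bmat]
    split_ifs <;> simp_all <;> ring
  rw [Finset.sum_congr rfl fun j _ => by rw [e1 j]]
  rw [sum_ite_two']
  simp only [Bmat]
  rw [sum_ite_one_comm]
  simp only [cols, one_mul]
  rfl

lemma ker_jordanFin_ne (k : ℕ) (μ₀ μ : ℂ) (hne : μ₀ ≠ μ) (d : ℕ) :
    LinearMap.ker
      (pencilBlockMat' (jordanFin k μ₀).Amat (jordanFin k μ₀).Bmat μ d).mulVecLin = ⊥ := by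
  rw [LinearMap.ker_eq_bot']
  intro x hx
  rw [Matrix.mulVecLin_apply] at hx
  have hrow : ∀ (p : Fin d) (i : Fin (k + 1)),
      (pencilBlockMat' (jordanFin k μ₀).Amat (jordanFin k μ₀).Bmat μ d).mulVec x (p, i) = 0 :=
    fun p i => congrFun hx (p, i)
  have hsub : μ - μ₀ ≠ 0 := sub_ne_zero.mpr (Ne.symm hne)
  have main : ∀ p : Fin d, (∀ q : Fin d, (q : ℕ) < (p : ℕ) → ∀ i, x (q, i) = 0) →
      ∀ t : ℕ, ∀ i : Fin (k + 1), k - (i : ℕ) ≤ t → x (p, i) = 0 := by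
    intro p hp t
    induction t with
    | zero =>
      intro i hi
      have h0 := hrow p i
      erw [row_jordanFin] at h0
      have z1 : (if h : (i : ℕ) + 1 < k + 1 then x (p, ⟨(i : ℕ) + 1, h⟩) else 0) = 0 := by
        rw [dif_neg]; omega
      have z2 : (if h : 1 ≤ (p : ℕ) then
          x (⟨(p : ℕ) - 1, Nat.lt_of_le_of_lt (Nat.sub_le _ _) p.isLt⟩, i) else 0) = 0 := by
        split_ifs with h
        · exact hp ⟨(p : ℕ) - 1, Nat.lt_of_le_of_lt (Nat.sub_le _ _) p.isLt⟩
            (Nat.sub_lt h one_pos) i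
        · rfl
      erw [z1, z2, add_zero, add_zero] at h0
      exact (mul_eq_zero.mp h0).resolve_left hsub
    | succ t ih =>
      intro i hi
      have h0 := hrow p i
      erw [row_jordanFin] at h0
      have z1 : (if h : (i : ℕ) + 1 < k + 1 then x (p, ⟨(i : ℕ) + 1, h⟩) else 0) = 0 := by
        split_ifs with h
        · exact ih ⟨(i : ℕ) + 1, h⟩ (show k - ((i : ℕ) + 1) ≤ t by omega)
        · rfl
      have z2 : (if h : 1 ≤ (p : ℕ) then
          x (⟨(p : ℕ) - 1, Nat.lt_of_le_of_lt (Nat.sub_le _ _) p.isLt⟩, i) else 0) = 0 := by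
        split_ifs with h
        · exact hp ⟨(p : ℕ) - 1, Nat.lt_of_le_of_lt (Nat.sub_le _ _) p.isLt⟩
            (Nat.sub_lt h one_pos) i
        · rfl
      erw [z1, z2, add_zero, add_zero] at h0
      exact (mul_eq_zero.mp h0).resolve_left hsub
  have outer : ∀ s : ℕ, ∀ p : Fin d, (p : ℕ) ≤ s → ∀ i, x (p, i) = 0 := by
    intro s
    induction s with
    | zero =>
      intro p hp i
      exact main p (fun q hq i' => absurd hq (by omega)) k i (Nat.sub_le _ _)
    | succ s ih =>
      intro p hp i
      exact main p (fun q hq i' => ih q (by omega) i') k i (Nat.sub_le _ _)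
  funext q
  exact outer (q.1 : ℕ) q.1 le_rfl q.2

lemma ker_jordanInf (k : ℕ) (μ : ℂ) (d : ℕ) :
    LinearMap.ker
      (pencilBlockMat' (jordanInf k).Amat (jordanInf k).Bmat μ d).mulVecLin = ⊥ := by
  rw [LinearMap.ker_eq_bot']
  intro x hx
  rw [Matrix.mulVecLin_apply] at hx
  have hrow : ∀ (p : Fin d) (i : Fin (k + 1)),
      (pencilBlockMat' (jordanInf k).Amat (jordanInf k).Bmat μ d).mulVec x (p, i) = 0 :=
    fun p i => congrFun hx (p, i)
  have main : ∀ p : Fin d, (∀ q : Fin d, (q : ℕ) < (p : ℕ) → ∀ i, x (q, i) = 0) →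
      ∀ t : ℕ, ∀ i : Fin (k + 1), k - (i : ℕ) ≤ t → x (p, i) = 0 := by
    intro p hp t
    induction t with
    | zero =>
      intro i hi
      have h0 := hrow p i
      erw [row_jordanInf] at h0
      rw [dif_neg (by omega : ¬ ((i : ℕ) + 1 < k + 1))] at h0
      have z2 : (if hp' : 1 ≤ (p : ℕ) then
          (if h : (i : ℕ) + 1 < k + 1 then
            x (⟨(p : ℕ) - 1, Nat.lt_of_le_of_lt (Nat.sub_le _ _) p.isLt⟩, ⟨(i : ℕ) + 1, h⟩)
          else 0) else 0) = 0 := by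
        split_ifs with h1 h2
        · exact hp ⟨(p : ℕ) - 1, Nat.lt_of_le_of_lt (Nat.sub_le _ _) p.isLt⟩
            (Nat.sub_lt h1 one_pos) _
        · rfl
        · rfl
      erw [z2, add_zero, add_zero] at h0
      exact h0
    | succ t ih =>
      intro i hi
      have h0 := hrow p i
      erw [row_jordanInf] at h0
      have z1 : (if h : (i : ℕ) + 1 < k + 1 then μ * x (p, ⟨(i : ℕ) + 1, h⟩) else 0) = 0 := by
        split_ifs with h
        · erw [ih ⟨(i : ℕ) + 1, h⟩ (show k - ((i : ℕ) + 1) ≤ t by omega), mul_zero]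
        · rfl
      have z2 : (if hp' : 1 ≤ (p : ℕ) then
          (if h : (i : ℕ) + 1 < k + 1 then
            x (⟨(p : ℕ) - 1, Nat.lt_of_le_of_lt (Nat.sub_le _ _) p.isLt⟩, ⟨(i : ℕ) + 1, h⟩)
          else 0) else 0) = 0 := by
        split_ifs with h1 h2
        · exact hp ⟨(p : ℕ) - 1, Nat.lt_of_le_of_lt (Nat.sub_le _ _) p.isLt⟩
            (Nat.sub_lt h1 one_pos) _
        · rfl
        · rfl
      erw [z1, z2, add_zero, add_zero] at h0
      exact h0
  have outer : ∀ s : ℕ, ∀ p : Fin d, (p : ℕ) ≤ s → ∀ i, x (p, i) = 0 := by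
    intro s
    induction s with
    | zero =>
      intro p hp i
      exact main p (fun q hq i' => absurd hq (by omega)) k i (Nat.sub_le _ _)
    | succ s ih =>
      intro p hp i
      exact main p (fun q hq i' => ih q (by omega) i') k i (Nat.sub_le _ _)
  funext q
  exact outer (q.1 : ℕ) q.1 le_rfl q.2

lemma row_leftSing_succ (k : ℕ) (μ : ℂ) (d : ℕ) (x : Fin d × Fin k → ℂ)
    (p : Fin d) (i : Fin k) :
    (pencilBlockMat' (leftSing k).Amat (leftSing k).Bmat μ d).mulVec x
        (p, ⟨(i : ℕ) + 1, Nat.succ_lt_succ i.isLt⟩)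
      = (if h : (i : ℕ) + 1 < k then μ * x (p, ⟨(i : ℕ) + 1, h⟩) else 0)
        + x (p, i)
        + (if hp : 1 ≤ (p : ℕ) then
            (if h : (i : ℕ) + 1 < k then
              x (⟨(p : ℕ) - 1, Nat.lt_of_le_of_lt (Nat.sub_le _ _) p.isLt⟩, ⟨(i : ℕ) + 1, h⟩)
            else 0) else 0) := by
  erw [row_leftSing]
  congr 1
  congr 1
  rw [dif_pos ⟨Nat.succ_le_succ (Nat.zero_le _), (by exact i.isLt : (i : ℕ) + 1 - 1 < k)⟩]
  exact congrArg x (congrArg _ (Fin.ext rfl))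

lemma ker_leftSing (k : ℕ) (μ : ℂ) (d : ℕ) :
    LinearMap.ker
      (pencilBlockMat' (leftSing k).Amat (leftSing k).Bmat μ d).mulVecLin = ⊥ := by
  rw [LinearMap.ker_eq_bot']
  intro x hx
  rw [Matrix.mulVecLin_apply] at hx
  have hrow : ∀ (p : Fin d) (i : Fin k),
      (pencilBlockMat' (leftSing k).Amat (leftSing k).Bmat μ d).mulVec x
        (p, ⟨(i : ℕ) + 1, Nat.succ_lt_succ i.isLt⟩) = 0 :=
    fun p i => congrFun hx (p, ⟨(i : ℕ) + 1, Nat.succ_lt_succ i.isLt⟩)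
  have main : ∀ p : Fin d, (∀ q : Fin d, (q : ℕ) < (p : ℕ) → ∀ i, x (q, i) = 0) →
      ∀ t : ℕ, ∀ i : Fin k, k - 1 - (i : ℕ) ≤ t → x (p, i) = 0 := by
    intro p hp t
    induction t with
    | zero =>
      intro i hi
      have h0 := hrow p i
      erw [row_leftSing_succ] at h0
      rw [dif_neg (show ¬ ((i : ℕ) + 1 < k) by omega)] at h0
      have z2 : (if hp' : 1 ≤ (p : ℕ) then
          (if h : (i : ℕ) + 1 < k then
            x (⟨(p : ℕ) - 1, Nat.lt_of_le_of_lt (Nat.sub_le _ _) p.isLt⟩, ⟨(i : ℕ) + 1, h⟩)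
          else 0) else 0) = 0 := by
        split_ifs with h1 h2
        · exact hp ⟨(p : ℕ) - 1, Nat.lt_of_le_of_lt (Nat.sub_le _ _) p.isLt⟩
            (Nat.sub_lt h1 one_pos) _
        · rfl
        · rfl
      erw [z2, add_zero, zero_add] at h0
      exact h0
    | succ t ih =>
      intro i hi
      have h0 := hrow p i
      erw [row_leftSing_succ] at h0
      have z1 : (if h : (i : ℕ) + 1 < k then μ * x (p, ⟨(i : ℕ) + 1, h⟩) else 0) = 0 := by
        split_ifs with h
        · erw [ih ⟨(i : ℕ) + 1, h⟩ (show k - 1 - ((i : ℕ) + 1) ≤ t by omega), mul_zero]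
        · rfl
      have z2 : (if hp' : 1 ≤ (p : ℕ) then
          (if h : (i : ℕ) + 1 < k then
            x (⟨(p : ℕ) - 1, Nat.lt_of_le_of_lt (Nat.sub_le _ _) p.isLt⟩, ⟨(i : ℕ) + 1, h⟩)
          else 0) else 0) = 0 := by
        split_ifs with h1 h2
        · exact hp ⟨(p : ℕ) - 1, Nat.lt_of_le_of_lt (Nat.sub_le _ _) p.isLt⟩
            (Nat.sub_lt h1 one_pos) _
        · rfl
        · rfl
      erw [z1, z2, add_zero, zero_add] at h0
      exact h0
  have outer : ∀ s : ℕ, ∀ p : Fin d, (p : ℕ) ≤ s → ∀ i, x (p, i) = 0 := by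
    intro s
    induction s with
    | zero =>
      intro p hp i
      exact main p (fun q hq i' => absurd hq (by omega)) (k - 1) i (Nat.sub_le _ _)
    | succ s ih =>
      intro p hp i
      exact main p (fun q hq i' => ih q (by omega) i') (k - 1) i (Nat.sub_le _ _)
  funext q
  exact outer (q.1 : ℕ) q.1 le_rfl q.2

noncomputable def rsAux (μ : ℂ) (d : ℕ) (c : Fin d → ℂ) : ℕ → Fin d → ℂ
  | 0 => c
  | i + 1 => fun p => -(μ * rsAux μ d c i p +
      (if _ : 1 ≤ (p : ℕ) then
        rsAux μ d c i ⟨(p : ℕ) - 1, Nat.lt_of_le_of_lt (Nat.sub_le _ _) p.isLt⟩ else 0))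

lemma finrank_ker_rightSing (k : ℕ) (μ : ℂ) (d : ℕ) :
    Module.finrank ℂ
      (LinearMap.ker (pencilBlockMat' (rightSing k).Amat (rightSing k).Bmat μ d).mulVecLin)
      = d := by
  set M := pencilBlockMat' (rightSing k).Amat (rightSing k).Bmat μ d with hM
  let φ : (LinearMap.ker M.mulVecLin) →ₗ[ℂ] (Fin d → ℂ) :=
    { toFun := fun x p => x.1 (p, ⟨0, Nat.succ_pos k⟩)
      map_add' := fun _ _ => rfl
      map_smul' := fun _ _ => rfl }
  have hker : ∀ x : Fin d × Fin (k + 1) → ℂ, x ∈ LinearMap.ker M.mulVecLin →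
      ∀ (p : Fin d) (i : Fin k), M.mulVec x (p, i) = 0 := by
    intro x hx p i
    exact congrFun (show M.mulVecLin x = 0 from hx) (p, i)
  have hinj : Function.Injective φ := by
    intro x y hxy
    suffices h : ∀ x : Fin d × Fin (k + 1) → ℂ, x ∈ LinearMap.ker M.mulVecLin →
        (∀ p : Fin d, x (p, ⟨0, Nat.succ_pos k⟩) = 0) → x = 0 by
      have hz : x.1 - y.1 ∈ LinearMap.ker M.mulVecLin :=
        (LinearMap.ker M.mulVecLin).sub_mem x.2 y.2
      have := h (x.1 - y.1) hz (fun p => sub_eq_zero_of_eq (congrFun hxy p))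
      exact Subtype.ext (by erw [sub_eq_zero] at this; exact this)
    intro x hx h0
    have main : ∀ p : Fin d, (∀ q : Fin d, (q : ℕ) < (p : ℕ) → ∀ j, x (q, j) = 0) →
        ∀ t : ℕ, ∀ j : Fin (k + 1), (j : ℕ) ≤ t → x (p, j) = 0 := by
      intro p hp t
      induction t with
      | zero =>
        intro j hj
        have : j = ⟨0, Nat.succ_pos k⟩ := Fin.ext (Nat.le_zero.mp hj)
        rw [this]; exact h0 p
      | succ t ih =>
        intro j hj
        by_cases hj0 : (j : ℕ) = 0
        · have : j = ⟨0, Nat.succ_pos k⟩ := Fin.ext hj0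
          rw [this]; exact h0 p
        · have hjk : (j : ℕ) - 1 < k := by omega
          set i : Fin k := ⟨(j : ℕ) - 1, hjk⟩ with hi
          have h0' := hker x hx p i
          rw [row_rightSing] at h0'
          have z1 : μ * x (p, ⟨(i : ℕ), Nat.lt_succ_of_lt i.isLt⟩) = 0 := by
            rw [ih ⟨(i : ℕ), Nat.lt_succ_of_lt i.isLt⟩ (show (j : ℕ) - 1 ≤ t by omega),
              mul_zero]
          have z3 : (if hp' : 1 ≤ (p : ℕ) then
              x (⟨(p : ℕ) - 1, Nat.lt_of_le_of_lt (Nat.sub_le _ _) p.isLt⟩,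
                 ⟨(i : ℕ), Nat.lt_succ_of_lt i.isLt⟩) else 0) = 0 := by
            split_ifs with h1
            · exact hp ⟨(p : ℕ) - 1, Nat.lt_of_le_of_lt (Nat.sub_le _ _) p.isLt⟩
                (Nat.sub_lt h1 one_pos) _
            · rfl
          rw [z1, z3, zero_add, add_zero] at h0'
          rw [show (⟨(i : ℕ) + 1, Nat.succ_lt_succ i.isLt⟩ : Fin (k + 1)) = j from
            Fin.ext (show ((j : ℕ) - 1) + 1 = (j : ℕ) by omega)] at h0'
          exact h0'
    have outer : ∀ s : ℕ, ∀ p : Fin d, (p : ℕ) ≤ s → ∀ j, x (p, j) = 0 := by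
      intro s
      induction s with
      | zero =>
        intro p hp j
        exact main p (fun q hq j' => absurd hq (by omega)) k j (Nat.lt_succ_iff.mp j.isLt)
      | succ s ih =>
        intro p hp j
        exact main p (fun q hq j' => ih q (by omega) j') k j (Nat.lt_succ_iff.mp j.isLt)
    funext q
    exact outer (q.1 : ℕ) q.1 le_rfl q.2
  have hsurj : Function.Surjective φ := by
    intro c
    set x : Fin d × Fin (k + 1) → ℂ := fun q => rsAux μ d c (q.2 : ℕ) q.1 with hx
    have hmem : x ∈ LinearMap.ker M.mulVecLin := by
      show M.mulVecLin x = 0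
      have : M.mulVecLin x = M.mulVec x := rfl
      rw [this]
      funext q
      obtain ⟨p, i⟩ := q
      simp only [Pi.zero_apply]
      erw [hM, row_rightSing]
      have : x (p, ⟨(i : ℕ) + 1, Nat.succ_lt_succ i.isLt⟩)
          = -(μ * x (p, ⟨(i : ℕ), Nat.lt_succ_of_lt i.isLt⟩) +
              (if _ : 1 ≤ (p : ℕ) then
                x (⟨(p : ℕ) - 1, Nat.lt_of_le_of_lt (Nat.sub_le _ _) p.isLt⟩,
                   ⟨(i : ℕ), Nat.lt_succ_of_lt i.isLt⟩) else 0)) := rfl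
      rw [this]
      ring
    refine ⟨⟨x, hmem⟩, ?_⟩
    funext p
    show x (p, ⟨0, Nat.succ_pos k⟩) = c p
    rfl
  rw [LinearEquiv.finrank_eq (LinearEquiv.ofBijective φ ⟨hinj, hsurj⟩),
    Module.finrank_fintype_fun_eq_card, Fintype.card_fin]

lemma finrank_ker_jordanFin_eq (k : ℕ) (μ : ℂ) (d : ℕ) :
    Module.finrank ℂ
      (LinearMap.ker (pencilBlockMat' (jordanFin k μ).Amat (jordanFin k μ).Bmat μ d).mulVecLin)
      = min d (k + 1) := by
  set m := min d (k + 1) with hm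
  have hmd : m ≤ d := min_le_left _ _
  have hmk : m ≤ k + 1 := min_le_right _ _
  set M := pencilBlockMat' (jordanFin k μ).Amat (jordanFin k μ).Bmat μ d with hM
  have hrow : ∀ x : Fin d × Fin (k + 1) → ℂ, x ∈ LinearMap.ker M.mulVecLin →
      ∀ (p : Fin d) (i : Fin (k + 1)),
      (if h : (i : ℕ) + 1 < k + 1 then x (p, ⟨(i : ℕ) + 1, h⟩) else 0)
        + (if h : 1 ≤ (p : ℕ) then
            x (⟨(p : ℕ) - 1, Nat.lt_of_le_of_lt (Nat.sub_le _ _) p.isLt⟩, i) else 0) = 0 := by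
    intro x hx p i
    have h0 : M.mulVec x (p, i) = 0 :=
      congrFun (show M.mulVecLin x = 0 from hx) (p, i)
    rw [hM, row_jordanFin] at h0
    rwa [sub_self, zero_mul, zero_add] at h0
  have diag : ∀ x : Fin d × Fin (k + 1) → ℂ, x ∈ LinearMap.ker M.mulVecLin →
      ∀ t : ℕ, ∀ (p : Fin d) (i : Fin (k + 1)), (i : ℕ) = t →
      x (p, i) = if _ : (i : ℕ) ≤ (p : ℕ) then
          (-1 : ℂ) ^ (i : ℕ) * x (⟨(p : ℕ) - (i : ℕ),
            Nat.lt_of_le_of_lt (Nat.sub_le _ _) p.isLt⟩, ⟨0, Nat.succ_pos k⟩)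
        else 0 := by
    intro x hx t
    induction t with
    | zero =>
      intro p i hi
      have : i = ⟨0, Nat.succ_pos k⟩ := Fin.ext hi
      subst this
      rw [dif_pos (Nat.zero_le _)]
      rw [show (⟨(p : ℕ) - 0, Nat.lt_of_le_of_lt (Nat.sub_le _ _) p.isLt⟩ : Fin d) = p from
        Fin.ext rfl]
      simp
    | succ t ih =>
      intro p i hi
      have htk : t + 1 < k + 1 := hi ▸ i.isLt
      have hrow' := hrow x hx p ⟨t, Nat.lt_of_succ_lt htk⟩
      rw [dif_pos (show t + 1 < k + 1 from htk)] at hrow'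
      have hieq : (⟨t + 1, htk⟩ : Fin (k + 1)) = i := Fin.ext hi.symm
      rw [hieq] at hrow'
      by_cases hp : 1 ≤ (p : ℕ)
      · rw [dif_pos hp] at hrow'
        have hx1 := eq_neg_of_add_eq_zero_left hrow'
        rw [hx1, ih ⟨(p : ℕ) - 1, Nat.lt_of_le_of_lt (Nat.sub_le _ _) p.isLt⟩
          ⟨t, Nat.lt_of_succ_lt htk⟩ rfl]
        by_cases hc : (i : ℕ) ≤ (p : ℕ)
        · rw [dif_pos (show t ≤ (p : ℕ) - 1 by omega), dif_pos hc]
          have e : (⟨(p : ℕ) - 1 - t,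
                Nat.lt_of_le_of_lt (Nat.sub_le _ _)
                  (Nat.lt_of_le_of_lt (Nat.sub_le _ _) p.isLt)⟩ : Fin d)
              = ⟨(p : ℕ) - (i : ℕ), Nat.lt_of_le_of_lt (Nat.sub_le _ _) p.isLt⟩ :=
            Fin.ext (show (p : ℕ) - 1 - t = (p : ℕ) - (i : ℕ) by omega)
          rw [e, hi, pow_succ]
          ring
        · rw [dif_neg (show ¬ (t ≤ (p : ℕ) - 1) by omega), dif_neg hc, neg_zero]
      · rw [dif_neg hp] at hrow'
        rw [dif_neg (show ¬ ((i : ℕ) ≤ (p : ℕ)) by omega)]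
        simpa using hrow'
  have zk : ∀ x : Fin d × Fin (k + 1) → ℂ, x ∈ LinearMap.ker M.mulVecLin →
      ∀ q : Fin d, (q : ℕ) + 1 < d → x (q, ⟨k, Nat.lt_succ_self k⟩) = 0 := by
    intro x hx q hq
    have hrow' := hrow x hx ⟨(q : ℕ) + 1, hq⟩ ⟨k, Nat.lt_succ_self k⟩
    rw [dif_neg (show ¬ (k + 1 < k + 1) by omega),
      dif_pos (show 1 ≤ (q : ℕ) + 1 from Nat.succ_le_succ (Nat.zero_le _))] at hrow'
    rw [zero_add] at hrow'
    rwa [show (⟨(q : ℕ) + 1 - 1,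
        Nat.lt_of_le_of_lt (Nat.sub_le _ _) (Fin.mk (q : ℕ).succ hq).isLt⟩ : Fin d) = q from
      Fin.ext (show (q : ℕ) + 1 - 1 = q from rfl)] at hrow'
  have z0 : ∀ x : Fin d × Fin (k + 1) → ℂ, x ∈ LinearMap.ker M.mulVecLin →
      (∀ t : Fin m, x (⟨d - m + (t : ℕ), by have := t.isLt; omega⟩, ⟨0, Nat.succ_pos k⟩) = 0) →
      ∀ q : Fin d, x (q, ⟨0, Nat.succ_pos k⟩) = 0 := by
    intro x hx h0 q
    by_cases hq : d - m ≤ (q : ℕ)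
    · have ht : (q : ℕ) - (d - m) < m := by have := q.isLt; omega
      have := h0 ⟨(q : ℕ) - (d - m), ht⟩
      rwa [show (⟨d - m + ((q : ℕ) - (d - m)), _⟩ : Fin d) = q from
        Fin.ext (show d - m + ((q : ℕ) - (d - m)) = q by omega)] at this
    · have hqk : (q : ℕ) + k + 1 < d := by omega
      have hZ := zk x hx ⟨(q : ℕ) + k, Nat.lt_of_succ_lt hqk⟩
        (show (q : ℕ) + k + 1 < d from hqk)
      rw [diag x hx k ⟨(q : ℕ) + k, Nat.lt_of_succ_lt hqk⟩ ⟨k, Nat.lt_succ_self k⟩ rfl] at hZ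
      rw [dif_pos (show k ≤ (q : ℕ) + k from Nat.le_add_left _ _)] at hZ
      rw [show (⟨(q : ℕ) + k - k,
          Nat.lt_of_le_of_lt (Nat.sub_le _ _) (Fin.mk _ (Nat.lt_of_succ_lt hqk)).isLt⟩ : Fin d)
          = q from Fin.ext (show (q : ℕ) + k - k = q by omega)] at hZ
      exact (mul_eq_zero.mp hZ).resolve_left (pow_ne_zero _ (neg_ne_zero.mpr one_ne_zero))
  let φ : (LinearMap.ker M.mulVecLin) →ₗ[ℂ] (Fin m → ℂ) :=
    { toFun := fun x t => x.1 (⟨d - m + (t : ℕ), by have := t.isLt; omega⟩, ⟨0, Nat.succ_pos k⟩)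
      map_add' := fun _ _ => rfl
      map_smul' := fun _ _ => rfl }
  have hinj : Function.Injective φ := by
    intro x y hxy
    have hz : x.1 - y.1 ∈ LinearMap.ker M.mulVecLin :=
      (LinearMap.ker M.mulVecLin).sub_mem x.2 y.2
    have h0 : ∀ t : Fin m,
        (x.1 - y.1) (⟨d - m + (t : ℕ), by have := t.isLt; omega⟩, ⟨0, Nat.succ_pos k⟩) = 0 :=
      fun t => sub_eq_zero_of_eq (congrFun hxy t)
    have hall : ∀ q : Fin d, ∀ i : Fin (k + 1), (x.1 - y.1) (q, i) = 0 := by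
      intro q i
      erw [diag _ hz (i : ℕ) q i rfl]
      split_ifs with h
      · rw [z0 _ hz h0, mul_zero]
      · rfl
    apply Subtype.ext
    rw [← sub_eq_zero]
    funext q
    exact hall q.1 q.2
  have hsurj : Function.Surjective φ := by
    intro c
    set x : Fin d × Fin (k + 1) → ℂ := fun q =>
      if _ : (q.2 : ℕ) ≤ (q.1 : ℕ) ∧ d - m ≤ (q.1 : ℕ) - (q.2 : ℕ) then
        (-1 : ℂ) ^ (q.2 : ℕ) * c ⟨(q.1 : ℕ) - (q.2 : ℕ) - (d - m), by
          have := q.1.isLt; omega⟩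
      else 0 with hxdef
    have hxval : ∀ (P : Fin d) (I : Fin (k + 1)), x (P, I)
        = if _ : (I : ℕ) ≤ (P : ℕ) ∧ d - m ≤ (P : ℕ) - (I : ℕ) then
            (-1 : ℂ) ^ (I : ℕ) * c ⟨(P : ℕ) - (I : ℕ) - (d - m), by
              have := P.isLt; omega⟩
          else 0 := fun P I => rfl
    have hmem : x ∈ LinearMap.ker M.mulVecLin := by
      show M.mulVecLin x = 0
      have hconv : M.mulVecLin x = M.mulVec x := rfl
      rw [hconv]
      funext q
      obtain ⟨p, i⟩ := q
      simp only [Pi.zero_apply]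
      erw [hM, row_jordanFin, sub_self, zero_mul, zero_add]
      by_cases hik : (i : ℕ) + 1 < k + 1
      · rw [dif_pos hik]
        by_cases hp : 1 ≤ (p : ℕ)
        · rw [dif_pos hp]
          rw [hxval p ⟨(i : ℕ) + 1, hik⟩,
            hxval ⟨(p : ℕ) - 1, Nat.lt_of_le_of_lt (Nat.sub_le _ _) p.isLt⟩ i]
          by_cases hcond : (i : ℕ) + 1 ≤ (p : ℕ) ∧ d - m ≤ (p : ℕ) - ((i : ℕ) + 1)
          · rw [dif_pos (show ((⟨(i : ℕ) + 1, hik⟩ : Fin (k + 1)) : ℕ) ≤ (p : ℕ)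
                ∧ d - m ≤ (p : ℕ) - ((⟨(i : ℕ) + 1, hik⟩ : Fin (k + 1)) : ℕ) from hcond)]
            rw [dif_pos (show (i : ℕ) ≤ (p : ℕ) - 1 ∧ d - m ≤ (p : ℕ) - 1 - (i : ℕ) from
              ⟨by omega, by omega⟩)]
            have hA : (p : ℕ) - ((i : ℕ) + 1) - (d - m) < m := by have := p.isLt; omega
            have hB : (p : ℕ) - 1 - (i : ℕ) - (d - m) < m := by have := p.isLt; omega
            have e : (⟨(p : ℕ) - ((i : ℕ) + 1) - (d - m), hA⟩ : Fin m) = ⟨(p : ℕ) - 1 - (i : ℕ) - (d - m), hB⟩ :=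
              Fin.ext (show (p : ℕ) - ((i : ℕ) + 1) - (d - m) = (p : ℕ) - 1 - (i : ℕ) - (d - m) by omega)
            simp only [Fin.val_mk]
            rw [e, pow_succ]
            ring
          · rw [dif_neg (show ¬ (((⟨(i : ℕ) + 1, hik⟩ : Fin (k + 1)) : ℕ) ≤ (p : ℕ)
                ∧ d - m ≤ (p : ℕ) - ((⟨(i : ℕ) + 1, hik⟩ : Fin (k + 1)) : ℕ)) from hcond)]
            rw [dif_neg (show ¬ ((i : ℕ) ≤ (p : ℕ) - 1 ∧ d - m ≤ (p : ℕ) - 1 - (i : ℕ)) from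
              fun hc => hcond ⟨by omega, by omega⟩)]
            rw [add_zero]
        · rw [dif_neg hp, hxval p ⟨(i : ℕ) + 1, hik⟩]
          rw [dif_neg (show ¬ (((⟨(i : ℕ) + 1, hik⟩ : Fin (k + 1)) : ℕ) ≤ (p : ℕ)
              ∧ d - m ≤ (p : ℕ) - ((⟨(i : ℕ) + 1, hik⟩ : Fin (k + 1)) : ℕ)) from
            fun hc => by
              have h1 : (i : ℕ) + 1 ≤ (p : ℕ) := hc.1
              omega)]
          rw [add_zero]
      · rw [dif_neg hik]
        by_cases hp : 1 ≤ (p : ℕ)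
        · rw [dif_pos hp,
            hxval ⟨(p : ℕ) - 1, Nat.lt_of_le_of_lt (Nat.sub_le _ _) p.isLt⟩ i]
          rw [dif_neg (show ¬ ((i : ℕ) ≤ (p : ℕ) - 1 ∧ d - m ≤ (p : ℕ) - 1 - (i : ℕ)) from
            fun hc => by
              have h1 := hc.1
              have h2 := hc.2
              have h3 := p.isLt
              have h4 := i.isLt
              omega)]
          rw [add_zero]
        · rw [dif_neg hp, add_zero]
    refine ⟨⟨x, hmem⟩, ?_⟩
    funext t
    show x (⟨d - m + (t : ℕ), by have := t.isLt; omega⟩, ⟨0, Nat.succ_pos k⟩) = c t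
    rw [hxval]
    simp only [Fin.val_mk]
    rw [dif_pos (show (0 : ℕ) ≤ d - m + (t : ℕ)
        ∧ d - m ≤ d - m + (t : ℕ) - 0 from
      ⟨Nat.zero_le _, by omega⟩)]
    have hA : d - m + (t : ℕ) - 0 - (d - m) < m := by have := t.isLt; omega
    have e : (⟨d - m + (t : ℕ) - 0 - (d - m), hA⟩ : Fin m) = t :=
      Fin.ext (show d - m + (t : ℕ) - 0 - (d - m) = (t : ℕ) by omega)
    rw [e, pow_zero, one_mul]
  rw [LinearEquiv.finrank_eq (LinearEquiv.ofBijective φ ⟨hinj, hsurj⟩),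
    Module.finrank_fintype_fun_eq_card, Fintype.card_fin]

lemma mulVec_pencil_blockDiagonal' {N d : ℕ} {r c : Fin N → ℕ}
    (A B : ∀ i, Matrix (Fin (r i)) (Fin (c i)) ℂ) (μ : ℂ)
    (x : Fin d × ((i : Fin N) × Fin (c i)) → ℂ) (p : Fin d) (i : Fin N) (a : Fin (r i)) :
    (pencilBlockMat' (Matrix.blockDiagonal' A) (Matrix.blockDiagonal' B) μ d).mulVec x
        (p, ⟨i, a⟩)
      = (pencilBlockMat' (A i) (B i) μ d).mulVec (fun pb => x (pb.1, ⟨i, pb.2⟩)) (p, a) := by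
  simp only [Matrix.mulVec, dotProduct, pencilBlockMat']
  rw [Fintype.sum_prod_type, Fintype.sum_prod_type]
  apply Finset.sum_congr rfl
  intro q _
  rw [← Finset.univ_sigma_univ, Finset.sum_sigma]
  rw [Fintype.sum_eq_single i]
  · apply Finset.sum_congr rfl
    intro b _
    have hdiag : (μ • Matrix.blockDiagonal' B + Matrix.blockDiagonal' A) ⟨i, a⟩ ⟨i, b⟩
        = (μ • B i + A i) a b := by
      show μ * Matrix.blockDiagonal' B ⟨i, a⟩ ⟨i, b⟩ + Matrix.blockDiagonal' A ⟨i, a⟩ ⟨i, b⟩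
        = μ * B i a b + A i a b
      rw [Matrix.blockDiagonal'_apply_eq A, Matrix.blockDiagonal'_apply_eq B]
    have hBd : Matrix.blockDiagonal' B ⟨i, a⟩ ⟨i, b⟩ = B i a b :=
      Matrix.blockDiagonal'_apply_eq B i a b
    show (if p = q then (μ • Matrix.blockDiagonal' B + Matrix.blockDiagonal' A) ⟨i, a⟩ ⟨i, b⟩
        else if (p : ℕ) = (q : ℕ) + 1 then Matrix.blockDiagonal' B ⟨i, a⟩ ⟨i, b⟩ else 0)
          * x (q, ⟨i, b⟩)
      = (if p = q then (μ • B i + A i) a b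
        else if (p : ℕ) = (q : ℕ) + 1 then B i a b else 0) * x (q, ⟨i, b⟩)
    rw [hdiag, hBd]
  · intro j hj
    apply Finset.sum_eq_zero
    intro b _
    have hB : Matrix.blockDiagonal' B ⟨i, a⟩ ⟨j, b⟩ = 0 :=
      Matrix.blockDiagonal'_apply_ne B a b (Ne.symm hj)
    have hAB : (μ • Matrix.blockDiagonal' B + Matrix.blockDiagonal' A) ⟨i, a⟩ ⟨j, b⟩ = 0 := by
      have hA : Matrix.blockDiagonal' A ⟨i, a⟩ ⟨j, b⟩ = 0 :=
        Matrix.blockDiagonal'_apply_ne A a b (Ne.symm hj)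
      show μ * _ + _ = 0
      rw [hA, hB, mul_zero, add_zero]
    rw [hAB, hB]
    split_ifs <;> ring

lemma finrank_ker_pencil_blockDiagonal' {N d : ℕ} {r c : Fin N → ℕ}
    (A B : ∀ i, Matrix (Fin (r i)) (Fin (c i)) ℂ) (μ : ℂ) :
    Module.finrank ℂ (LinearMap.ker
        (pencilBlockMat' (Matrix.blockDiagonal' A) (Matrix.blockDiagonal' B) μ d).mulVecLin)
      = ∑ i : Fin N, Module.finrank ℂ
          (LinearMap.ker (pencilBlockMat' (A i) (B i) μ d).mulVecLin) := by
  set Mtot := pencilBlockMat' (Matrix.blockDiagonal' A) (Matrix.blockDiagonal' B) μ d with hMtot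
  let E : (LinearMap.ker Mtot.mulVecLin) ≃ₗ[ℂ]
      ((i : Fin N) → LinearMap.ker ((pencilBlockMat' (A i) (B i) μ d).mulVecLin)) :=
    { toFun := fun x i => ⟨fun pb => x.1 (pb.1, ⟨i, pb.2⟩), by
        show (pencilBlockMat' (A i) (B i) μ d).mulVecLin _ = 0
        have hconv : (pencilBlockMat' (A i) (B i) μ d).mulVecLin
            (fun pb => x.1 (pb.1, ⟨i, pb.2⟩))
          = (pencilBlockMat' (A i) (B i) μ d).mulVec (fun pb => x.1 (pb.1, ⟨i, pb.2⟩)) := rfl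
        rw [hconv]
        funext q
        obtain ⟨p, a⟩ := q
        rw [← mulVec_pencil_blockDiagonal' A B μ x.1 p i a]
        exact congrFun (show Mtot.mulVecLin x.1 = 0 from x.2) (p, ⟨i, a⟩)⟩
      map_add' := fun _ _ => rfl
      map_smul' := fun _ _ => rfl
      invFun := fun y => ⟨fun q => (y q.2.1).1 (q.1, q.2.2), by
        show Mtot.mulVecLin _ = 0
        have hconv : Mtot.mulVecLin (fun q : Fin d × ((i : Fin N) × Fin (c i)) =>
            (y q.2.1).1 (q.1, q.2.2))
          = Mtot.mulVec (fun q : Fin d × ((i : Fin N) × Fin (c i)) =>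
            (y q.2.1).1 (q.1, q.2.2)) := rfl
        rw [hconv, hMtot]
        funext q
        obtain ⟨p, σ⟩ := q
        obtain ⟨i, a⟩ := σ
        rw [mulVec_pencil_blockDiagonal']
        exact congrFun
          (show (pencilBlockMat' (A i) (B i) μ d).mulVecLin (y i).1 = 0 from (y i).2) (p, a)⟩
      left_inv := fun _ => rfl
      right_inv := fun _ => rfl }
  rw [LinearEquiv.finrank_eq E, Module.finrank_pi_fintype]

open KroneckerBlock in
lemma block_ker_finrank (b : KroneckerBlock) (μ : ℂ) (d : ℕ) :
    Module.finrank ℂ (LinearMap.ker (pencilBlockMat' b.Amat b.Bmat μ d).mulVecLin)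
      = b.jordanContribution d μ + (if b.isRightSing = true then d else 0) := by
  cases b with
  | jordanFin k μ₀ =>
    by_cases h : μ₀ = μ
    · subst h
      rw [finrank_ker_jordanFin_eq]
      simp [jordanContribution, isRightSing]
    · rw [ker_jordanFin_ne k μ₀ μ h d]
      simp [jordanContribution, isRightSing, h]
  | jordanInf k =>
    rw [ker_jordanInf]
    simp [jordanContribution, isRightSing]
  | rightSing k =>
    rw [finrank_ker_rightSing]
    simp [jordanContribution, isRightSing]
  | leftSing k =>
    rw [ker_leftSing]
    simp [jordanContribution, isRightSing]

/-- Nullity formula for `P_μ^d(L)` of a pencil `L` in Kronecker canonical form: the nullity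
`d·n − rank P_μ^d(L)` equals the sum of `min(d, k_j)` over the Jordan blocks at the finite
eigenvalue `μ`, plus `d` times the number of right singular blocks. -/
theorem nullity_pencilBlockMat_kcf (N : ℕ) (blocks : Fin N → KroneckerBlock)
    (μ : ℂ) (d : ℕ) (hd : 1 ≤ d) :
    d * (∑ i : Fin N, (blocks i).cols)
        - (pencilBlockMat'
            (Matrix.blockDiagonal' (fun i : Fin N => (blocks i).Amat))
            (Matrix.blockDiagonal' (fun i : Fin N => (blocks i).Bmat)) μ d).rank
      = (∑ i : Fin N, (blocks i).jordanContribution d μ)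
        + d * (Finset.univ.filter (fun i : Fin N => (blocks i).isRightSing = true)).card := by
  set Mtot := pencilBlockMat'
      (Matrix.blockDiagonal' (fun i : Fin N => (blocks i).Amat))
      (Matrix.blockDiagonal' (fun i : Fin N => (blocks i).Bmat)) μ d with hMtot
  have hnull : Module.finrank ℂ (LinearMap.ker Mtot.mulVecLin)
      = (∑ i : Fin N, (blocks i).jordanContribution d μ)
        + d * (Finset.univ.filter (fun i : Fin N => (blocks i).isRightSing = true)).card := by
    rw [hMtot, finrank_ker_pencil_blockDiagonal']
    have : ∀ i : Fin N, Module.finrank ℂ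
        (LinearMap.ker (pencilBlockMat' ((blocks i).Amat) ((blocks i).Bmat) μ d).mulVecLin)
        = (blocks i).jordanContribution d μ
          + (if (blocks i).isRightSing = true then d else 0) :=
      fun i => block_ker_finrank (blocks i) μ d
    rw [Finset.sum_congr rfl fun i _ => this i, Finset.sum_add_distrib]
    congr 1
    rw [← Finset.sum_filter, Finset.sum_const, smul_eq_mul, mul_comm]
  have hrn : Mtot.rank + Module.finrank ℂ (LinearMap.ker Mtot.mulVecLin)
      = d * (∑ i : Fin N, (blocks i).cols) := by
    have h1 := LinearMap.finrank_range_add_finrank_ker Mtot.mulVecLin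
    rw [Module.finrank_fintype_fun_eq_card] at h1
    rw [Matrix.rank]
    rw [h1]
    rw [Fintype.card_prod, Fintype.card_sigma]
    simp only [Fintype.card_fin]
  omega
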